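/- arXiv:1411.6106 — 3 statements merged into one kernel-verified Lean document; each statement's English description precedes it below -/
import Mathlib

section
/- Let 0 < α < 1 and ω ∈ ℝ, and let b_r(r,θ) = Re(b_α(re^{iθ}) e^{−iθ}) be the radial component of b_α. Then for each θ, b_r(1,θ) = 0 and the partial derivative with respect to r at r = 1 equals ∂b_r/∂r(1,θ) = 2(1 − α² − ωα sin θ)/(1 − α²). Equivalently, with ρ = 1 − r the distance to the unit circle from inside, b_r = −ρ b⁰_α(θ) + o(ρ) as ρ → 0, where b⁰_α(θ) = 2(1 − α² − ωα sin θ)/(1 − α²). -/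
open Asymptotics

/-- The transformed Hopf field
`b_α(ζ) = ((ζ + α)(1 + αζ)/(1 − α²))(−1 + |(ζ + α)/(1 + αζ)|² + iω)`. -/
noncomputable def transformedField (α ω : ℝ) (ζ : ℂ) : ℂ :=
  (ζ + α) * (1 + α * ζ) / (1 - (α : ℂ) ^ 2) *
    (-1 + (‖(ζ + α) / (1 + α * ζ)‖ : ℂ) ^ 2 + Complex.I * ω)

/-- The radial component `b_r(r,θ) = Re(b_α(re^{iθ})e^{−iθ})`. -/
noncomputable def radialComponent (α ω r θ : ℝ) : ℝ :=
  (transformedField α ω ((r : ℂ) * Complex.exp (Complex.I * θ)) *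
      Complex.exp (-(Complex.I * θ))).re

lemma radial_eq (α ω : ℝ) (hα : (1:ℝ) - α^2 ≠ 0) (θ r : ℝ)
    (hB : 1 + 2*α*r*Real.cos θ + α^2*r^2 ≠ 0) :
    radialComponent α ω r θ = (r^2-1) * ((r*(1+α^2)+α*Real.cos θ*(1+r^2))/(1+2*α*r*Real.cos θ+α^2*r^2) - ω*α*Real.sin θ/(1-α^2)) := by
  have hcs : Real.cos θ^2 + Real.sin θ^2 = 1 := Real.cos_sq_add_sin_sq θ
  have he : Complex.exp (Complex.I * θ) = (Real.cos θ : ℂ) + (Real.sin θ : ℂ) * Complex.I := by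
    rw [mul_comm, Complex.exp_mul_I]
    simp [← Complex.ofReal_cos, ← Complex.ofReal_sin]
  have he' : Complex.exp (-(Complex.I * θ)) = (Real.cos θ : ℂ) - (Real.sin θ : ℂ) * Complex.I := by
    have h : -(Complex.I * (θ:ℂ)) = ((-θ:ℝ):ℂ) * Complex.I := by push_cast; ring
    rw [h, Complex.exp_mul_I, ← Complex.ofReal_cos, ← Complex.ofReal_sin,
      Real.cos_neg, Real.sin_neg]
    push_cast; ring
  set c := Real.cos θ
  set s := Real.sin θ
  have hcsC : (c:ℂ)^2 + (s:ℂ)^2 = 1 := by exact_mod_cast hcs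
  set ζ : ℂ := (r:ℂ) * Complex.exp (Complex.I * θ) with hζdef
  have hζ : ζ = (r:ℂ) * ((c:ℂ) + (s:ℂ) * Complex.I) := by rw [hζdef, he]
  set B : ℝ := 1 + 2*α*r*c + α^2*r^2 with hBdef
  set X : ℝ := r*(1+α^2) + α*c*(1+r^2) with hXdef
  set Y : ℝ := α*s*(r^2-1) with hYdef
  set u : ℝ := (r^2-1)*(1-α^2)/B with hudef
  -- normSq computations
  have hnB : Complex.normSq (1 + (α:ℂ) * ζ) = B := by
    rw [hζ]; simp [Complex.normSq_apply, hBdef]; linear_combination (α^2*r^2) * hcs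
  have hnA : Complex.normSq (ζ + (α:ℂ)) = r^2 + 2*α*r*c + α^2 := by
    rw [hζ]; simp [Complex.normSq_apply]; linear_combination (r^2) * hcs
  -- factor 2
  have h1 : (-1 + (‖(ζ + α) / (1 + α * ζ)‖ : ℂ) ^ 2 + Complex.I * ω)
      = ((u:ℝ):ℂ) + Complex.I * ω := by
    have habs : ((‖(ζ + α) / (1 + α * ζ)‖ : ℂ)) ^ 2
        = ((Complex.normSq (ζ + α) / Complex.normSq (1 + α * ζ) : ℝ) : ℂ) := by
      rw [← Complex.ofReal_pow, Complex.sq_norm, map_div₀]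
    rw [habs, hnA, hnB]
    have : (-1 : ℝ) + (r^2 + 2*α*r*c + α^2)/B = u := by
      rw [hudef, eq_div_iff hB, add_mul, div_mul_cancel₀ _ hB, hBdef]; ring
    rw [← this]; push_cast; ring
  -- factor 1 times e^{-iθ}
  have h2 : (ζ + α) * (1 + α * ζ) * Complex.exp (-(Complex.I * θ))
      = (X:ℝ) + (Y:ℝ) * Complex.I := by
    rw [hζ, he', hXdef, hYdef]
    push_cast
    linear_combination ((r:ℂ)*(1+(α:ℂ)^2) + (α:ℂ)*(r:ℂ)^2*((c:ℂ)+(s:ℂ)*Complex.I)) * hcsC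
      + (-((r:ℂ)*(s:ℂ)^2 + (r:ℂ)*(s:ℂ)^2*(α:ℂ)^2 + (r:ℂ)^2*(c:ℂ)*(s:ℂ)^2*(α:ℂ) + (r:ℂ)^2*(s:ℂ)^3*(α:ℂ)*Complex.I)) * Complex.I_sq
  have h3 : transformedField α ω ζ * Complex.exp (-(Complex.I * θ))
      = (((X:ℝ):ℂ) + ((Y:ℝ):ℂ) * Complex.I) * (((u:ℝ):ℂ) + Complex.I * ω) / ((1 - α^2 : ℝ):ℂ) := by
    rw [transformedField, h1, ← h2]
    push_cast
    ring
  rw [radialComponent, ← hζdef, h3]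
  rw [Complex.div_ofReal_re]
  simp [Complex.add_re, Complex.mul_re]
  rw [hudef, hYdef, hBdef]
  field_simp

/-- For each `θ`, `b_r(1,θ) = 0` and `∂b_r/∂r(1,θ) = 2(1 − α² − ωα sin θ)/(1 − α²)`;
equivalently, with `ρ = 1 − r`, `b_r = −ρ b⁰_α(θ) + o(ρ)` as `ρ → 0`, where
`b⁰_α(θ) = 2(1 − α² − ωα sin θ)/(1 − α²)`. -/
theorem radial_component_boundary_expansion (α ω : ℝ) (hα₀ : 0 < α) (hα₁ : α < 1) :
    ∀ θ : ℝ,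
      radialComponent α ω 1 θ = 0 ∧
      HasDerivAt (fun r : ℝ => radialComponent α ω r θ)
        (2 * (1 - α ^ 2 - ω * α * Real.sin θ) / (1 - α ^ 2)) 1 ∧
      (fun ρ : ℝ => radialComponent α ω (1 - ρ) θ +
          ρ * (2 * (1 - α ^ 2 - ω * α * Real.sin θ) / (1 - α ^ 2)))
        =o[nhds 0] fun ρ : ℝ => ρ := by
  intro θ
  set c := Real.cos θ
  set s := Real.sin θ
  set d : ℝ := 2 * (1 - α ^ 2 - ω * α * s) / (1 - α ^ 2) with hd
  have hα' : (1:ℝ) - α^2 ≠ 0 := by nlinarith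
  have hB1 : (0:ℝ) < 1 + 2*α*1*c + α^2*1^2 := by
    nlinarith [Real.neg_one_le_cos θ, sq_nonneg (1-α)]
  -- Part 1
  have part1 : radialComponent α ω 1 θ = 0 := by
    rw [radial_eq α ω hα' θ 1 hB1.ne']
    norm_num
  -- the smooth model function
  set g : ℝ → ℝ := fun r => (r^2-1) * ((r*(1+α^2)+α*c*(1+r^2))/(1+2*α*r*c+α^2*r^2) - ω*α*s/(1-α^2)) with hg
  -- eventual equality
  have hBcont : ContinuousAt (fun r : ℝ => 1 + 2*α*r*c + α^2*r^2) 1 := by fun_prop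
  have hev : (fun r : ℝ => radialComponent α ω r θ) =ᶠ[nhds 1] g := by
    filter_upwards [hBcont.eventually_ne hB1.ne'] with r hr
    exact radial_eq α ω hα' θ r hr
  -- derivative of g
  have hp : HasDerivAt (fun r : ℝ => r^2 - 1) 2 1 := by
    simpa using ((hasDerivAt_pow 2 (1:ℝ)).sub_const 1)
  have hnum : DifferentiableAt ℝ (fun r : ℝ => r*(1+α^2)+α*c*(1+r^2)) 1 := by fun_prop
  have hden : DifferentiableAt ℝ (fun r : ℝ => 1 + 2*α*r*c + α^2*r^2) 1 := by fun_prop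
  have hq : DifferentiableAt ℝ (fun r : ℝ =>
      (r*(1+α^2)+α*c*(1+r^2))/(1+2*α*r*c+α^2*r^2) - ω*α*s/(1-α^2)) 1 :=
    (hnum.div hden hB1.ne').sub_const _
  have hqd := hq.hasDerivAt
  have hgderiv : HasDerivAt g d 1 := by
    have h := hp.mul hqd
    norm_num at h
    refine HasDerivAt.congr_deriv h ?_
    have hb : (1:ℝ) + 2*α*c + α^2 ≠ 0 := by nlinarith
    rw [hd]
    field_simp
    ring
  have part2 : HasDerivAt (fun r : ℝ => radialComponent α ω r θ) d 1 :=
    hgderiv.congr_of_eventuallyEq hev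
  refine ⟨part1, part2, ?_⟩
  -- Part 3
  have hlin : HasDerivAt (fun ρ : ℝ => 1 - ρ) (-1) 0 := by
    simpa using ((hasDerivAt_id (0:ℝ)).const_sub 1)
  have hF : HasDerivAt (fun ρ : ℝ => radialComponent α ω (1-ρ) θ) (-d) 0 := by
    have h2 : HasDerivAt (fun r : ℝ => radialComponent α ω r θ) d ((fun ρ : ℝ => 1 - ρ) 0) := by
      simpa using part2
    exact (h2.comp 0 hlin).congr_deriv (by ring)
  rw [hasDerivAt_iff_isLittleO] at hF
  simp only [sub_zero] at hF
  have heq : (fun ρ : ℝ => radialComponent α ω (1-ρ) θ + ρ * d)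
      = fun ρ : ℝ => radialComponent α ω (1-ρ) θ - radialComponent α ω 1 θ - ρ • (-d) := by
    funext ρ; rw [part1]; simp [smul_eq_mul]
  rw [heq]
  exact hF
end

section
/- Let ω > 0, let σ : ℝ → ℝ be continuous and 2π-periodic, and let Z : ℝ → (0, ∞) be a C¹ 2π-periodic positive solution of Z'(s) − (4/ω) Z(s) = −(2/ω) σ(s). Then ∫₀^{2π} σ(s)/Z(s) ds = 4π. Consequently, with ξ = Z^{−1/2} the periodic solution of the Bernoulli equation and B(s) = ω the constant tangential speed, the real part of the second eigenvalue, ω₁ = (ω₂/π) ∫₀^{2π} σ(s) ξ(s)²/B(s) ds with ω₂ = ω, equals 4, independently of σ, ω and α. -/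
/-- If `Z` is a positive `2π`-periodic `C¹` solution of `Z'(s) − (4/ω)Z(s) = −(2/ω)σ(s)`
with `σ` continuous and `2π`-periodic, then `∫₀^{2π} σ(s)/Z(s) ds = 4π`; consequently,
with `ξ = Z^{−1/2}`, `B(s) = ω` and `ω₂ = ω`, the real part of the second eigenvalue
`ω₁ = (ω₂/π)∫₀^{2π} σ(s)ξ(s)²/B(s) ds` equals `4`, independently of `σ`, `ω` and `α`. -/
theorem real_part_second_eigenvalue_eq_four (ω : ℝ) (hω : 0 < ω) (σ Z Z' : ℝ → ℝ)
    (hσ : Continuous σ) (hσper : Function.Periodic σ (2 * Real.pi))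
    (hZ : ∀ s, HasDerivAt Z (Z' s) s) (hZ' : Continuous Z')
    (hZper : Function.Periodic Z (2 * Real.pi)) (hZpos : ∀ s, 0 < Z s)
    (hode : ∀ s, Z' s - 4 / ω * Z s = -(2 / ω) * σ s) :
    (∫ s in (0 : ℝ)..(2 * Real.pi), σ s / Z s) = 4 * Real.pi ∧
    ω / Real.pi *
        ∫ s in (0 : ℝ)..(2 * Real.pi), σ s * ((Real.sqrt (Z s))⁻¹) ^ 2 / ω = 4 := by
  have hωne : ω ≠ 0 := hω.ne'
  have hZne : ∀ s, Z s ≠ 0 := fun s => (hZpos s).ne'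
  have hZc : Continuous Z := by
    refine continuous_iff_continuousAt.mpr fun s => (hZ s).continuousAt
  have hlog : ∀ s, HasDerivAt (fun t => Real.log (Z t)) (Z' s / Z s) s :=
    fun s => (hZ s).log (hZne s)
  have hcont : Continuous (fun s => Z' s / Z s) := hZ'.div hZc hZne
  have hint : (∫ s in (0:ℝ)..(2*Real.pi), Z' s / Z s) = 0 := by
    rw [intervalIntegral.integral_eq_sub_of_hasDerivAt (fun s _ => hlog s)
      (hcont.intervalIntegrable _ _)]
    have := hZper 0
    simp at this
    rw [this]
    ring
  have key : ∀ s, σ s / Z s = 2 - ω / 2 * (Z' s / Z s) := by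
    intro s
    have h := hode s
    have hσs : σ s = 2 * Z s - ω / 2 * Z' s := by
      field_simp at h ⊢
      linarith
    rw [hσs]
    field_simp
    rw [sub_div, mul_div_cancel_right₀ _ (hZne s)]
  have hmain : (∫ s in (0:ℝ)..(2*Real.pi), σ s / Z s) = 4 * Real.pi := by
    rw [intervalIntegral.integral_congr (g := fun s => 2 - ω / 2 * (Z' s / Z s))
      (fun s _ => key s)]
    rw [intervalIntegral.integral_sub (g := fun s => ω / 2 * (Z' s / Z s)) (intervalIntegrable_const)
      (((continuous_const.mul hcont : Continuous fun s => ω / 2 * (Z' s / Z s))).intervalIntegrable _ _),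
      intervalIntegral.integral_const_mul, hint]
    simp
    ring
  refine ⟨hmain, ?_⟩
  have heq : ∀ s, σ s * ((Real.sqrt (Z s))⁻¹) ^ 2 / ω = (σ s / Z s) * ω⁻¹ := by
    intro s
    rw [inv_pow, Real.sq_sqrt (hZpos s).le]
    field_simp
  rw [intervalIntegral.integral_congr (fun s _ => heq s),
    intervalIntegral.integral_mul_const, hmain]
  field_simp
end

section
/- Let σ, b⁰, B : ℝ → ℝ be continuous with σ > 0, and let ξ : ℝ → (0, ∞) be a C¹ solution of −σ(s)ξ(s)³ + b⁰(s)ξ(s) + B(s)ξ'(s) = 0, and set φ = −ξ². Then the function Q⁰(ζ, s) = −√(2/π) ∫₀^{ξ(s)ζ} e^{−z²/2} dz satisfies the boundary-layer equation σ(s) ∂²Q⁰/∂ζ² − ζ[b⁰(s) + 2σ(s)φ(s)] ∂Q⁰/∂ζ − B(s) ∂Q⁰/∂s = 0 for all ζ ∈ ℝ and s ∈ ℝ, together with the boundary condition Q⁰(0, s) = 0 and the matching condition lim_{ζ→−∞} Q⁰(ζ, s) = 1 for every s. -/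
open Filter

/-- The boundary-layer function `Q⁰(ζ, s) = −√(2/π) ∫₀^{ξ(s)ζ} e^{−z²/2} dz`. -/
noncomputable def Q0 (ξ : ℝ → ℝ) (ζ s : ℝ) : ℝ :=
  -Real.sqrt (2 / Real.pi) * ∫ z in (0 : ℝ)..(ξ s * ζ), Real.exp (-z ^ 2 / 2)

/-- `∂Q⁰/∂ζ = −√(2/π) ξ(s) e^{−(ξ(s)ζ)²/2}`. -/
noncomputable def Q0dζ (ξ : ℝ → ℝ) (ζ s : ℝ) : ℝ :=
  -Real.sqrt (2 / Real.pi) * ξ s * Real.exp (-(ξ s * ζ) ^ 2 / 2)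

/-- `∂²Q⁰/∂ζ² = √(2/π) ξ(s)³ ζ e^{−(ξ(s)ζ)²/2}`. -/
noncomputable def Q0dζζ (ξ : ℝ → ℝ) (ζ s : ℝ) : ℝ :=
  Real.sqrt (2 / Real.pi) * ξ s ^ 3 * ζ * Real.exp (-(ξ s * ζ) ^ 2 / 2)

/-- `∂Q⁰/∂s = −√(2/π) ξ'(s) ζ e^{−(ξ(s)ζ)²/2}`. -/
noncomputable def Q0ds (ξ ξ' : ℝ → ℝ) (ζ s : ℝ) : ℝ :=
  -Real.sqrt (2 / Real.pi) * ξ' s * ζ * Real.exp (-(ξ s * ζ) ^ 2 / 2)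

open Real MeasureTheory in
lemma gauss_cont : Continuous (fun z : ℝ => Real.exp (-z ^ 2 / 2)) := by
  continuity

open Real MeasureTheory in
lemma gauss_integrable : Integrable (fun z : ℝ => Real.exp (-z ^ 2 / 2)) := by
  have : (fun z : ℝ => Real.exp (-z ^ 2 / 2)) = fun z : ℝ => Real.exp (-(1/2) * z ^ 2) := by
    ext z; ring_nf
  rw [this]
  exact integrable_exp_neg_mul_sq (by norm_num)

open Real MeasureTheory in
lemma hasDerivAt_F (u : ℝ) :
    HasDerivAt (fun u : ℝ => ∫ z in (0:ℝ)..u, Real.exp (-z ^ 2 / 2))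
      (Real.exp (-u ^ 2 / 2)) u := by
  exact intervalIntegral.integral_hasDerivAt_right
    gauss_integrable.intervalIntegrable
    (gauss_cont.aestronglyMeasurable.stronglyMeasurableAtFilter)
    gauss_cont.continuousAt

open Real MeasureTheory Set in
lemma Iic_gauss : (∫ z in Iic (0:ℝ), Real.exp (-z ^ 2 / 2)) = Real.sqrt (2 * π) / 2 := by
  have h : (∫ z in Iic (0:ℝ), Real.exp (-z ^ 2 / 2))
      = ∫ z in Ioi (0:ℝ), Real.exp (-(1/2) * z ^ 2) := by
    rw [← neg_zero, ← integral_comp_neg_Iic]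
    norm_num [neg_pow]
    congr 1; ext z; ring_nf
  rw [h, integral_gaussian_Ioi]
  rw [show π / (1/2) = 2 * π by ring]

/-- With `ξ > 0` a `C¹` solution of the Bernoulli equation `−σξ³ + b⁰ξ + Bξ' = 0` and
`φ = −ξ²`, the function `Q⁰(ζ,s) = −√(2/π)∫₀^{ξ(s)ζ} e^{−z²/2} dz` satisfies the
boundary-layer equation
`σ(s)∂²Q⁰/∂ζ² − ζ[b⁰(s) + 2σ(s)φ(s)]∂Q⁰/∂ζ − B(s)∂Q⁰/∂s = 0`, the boundary condition
`Q⁰(0,s) = 0`, and the matching condition `Q⁰(ζ,s) → 1` as `ζ → −∞`. -/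
theorem boundary_layer_equation (σ b₀ B ξ ξ' : ℝ → ℝ)
    (hσc : Continuous σ) (hσ : ∀ s, 0 < σ s)
    (hξ : ∀ s, HasDerivAt ξ (ξ' s) s) (hξ'c : Continuous ξ') (hξpos : ∀ s, 0 < ξ s)
    (hbern : ∀ s, -σ s * ξ s ^ 3 + b₀ s * ξ s + B s * ξ' s = 0) :
    ∀ ζ s : ℝ,
      HasDerivAt (fun z => Q0 ξ z s) (Q0dζ ξ ζ s) ζ ∧
      HasDerivAt (fun z => Q0dζ ξ z s) (Q0dζζ ξ ζ s) ζ ∧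
      HasDerivAt (fun t => Q0 ξ ζ t) (Q0ds ξ ξ' ζ s) s ∧
      σ s * Q0dζζ ξ ζ s - ζ * (b₀ s + 2 * σ s * (-ξ s ^ 2)) * Q0dζ ξ ζ s -
          B s * Q0ds ξ ξ' ζ s = 0 ∧
      Q0 ξ 0 s = 0 ∧
      Tendsto (fun z => Q0 ξ z s) atBot (nhds 1) := by
  intro ζ s
  have sqrtpos : (0:ℝ) < Real.sqrt (2 / Real.pi) := by
    apply Real.sqrt_pos.2; positivity
  have hdζ : HasDerivAt (fun z => Q0 ξ z s) (Q0dζ ξ ζ s) ζ := by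
    have h1 : HasDerivAt (fun z : ℝ => ξ s * z) (ξ s) ζ := by
      simpa using (hasDerivAt_id ζ).const_mul (ξ s)
    have h2 := ((hasDerivAt_F (ξ s * ζ)).comp ζ h1).const_mul
      (-Real.sqrt (2 / Real.pi))
    have h3 : Q0dζ ξ ζ s =
        -Real.sqrt (2 / Real.pi) * (Real.exp (-(ξ s * ζ) ^ 2 / 2) * ξ s) := by
      simp only [Q0dζ]; ring
    rw [h3]
    exact h2
  have hdζζ : HasDerivAt (fun z => Q0dζ ξ z s) (Q0dζζ ξ ζ s) ζ := by
    have h1 : HasDerivAt (fun z : ℝ => -(ξ s * z) ^ 2 / 2) (-(ξ s ^ 2 * ζ)) ζ := by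
      have h0 : HasDerivAt (fun z : ℝ => ξ s * z) (ξ s) ζ := by
        simpa using (hasDerivAt_id ζ).const_mul (ξ s)
      have := ((h0.pow 2).neg).div_const 2
      refine this.congr_deriv ?_
      simp; ring
    have h2 := (h1.exp).const_mul (-Real.sqrt (2 / Real.pi) * ξ s)
    refine h2.congr_deriv ?_
    simp only [Q0dζζ]; ring
  have hds : HasDerivAt (fun t => Q0 ξ ζ t) (Q0ds ξ ξ' ζ s) s := by
    have h1 : HasDerivAt (fun t : ℝ => ξ t * ζ) (ξ' s * ζ) s := (hξ s).mul_const ζ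
    have h2 := ((hasDerivAt_F (ξ s * ζ)).comp s h1).const_mul
      (-Real.sqrt (2 / Real.pi))
    refine h2.congr_deriv ?_
    simp only [Q0ds]; ring
  refine ⟨hdζ, hdζζ, hds, ?_, ?_, ?_⟩
  · simp only [Q0dζ, Q0dζζ, Q0ds]
    linear_combination
      (Real.sqrt (2 / Real.pi) * ζ * Real.exp (-(ξ s * ζ) ^ 2 / 2)) * hbern s
  · simp [Q0]
  · have hint : Tendsto (fun a : ℝ => ∫ z in a..(0:ℝ), Real.exp (-z ^ 2 / 2)) atBot
        (nhds (∫ z in Set.Iic (0:ℝ), Real.exp (-z ^ 2 / 2))) :=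
      MeasureTheory.intervalIntegral_tendsto_integral_Iic 0
        gauss_integrable.integrableOn tendsto_id
    have hF : Tendsto (fun u : ℝ => ∫ z in (0:ℝ)..u, Real.exp (-z ^ 2 / 2)) atBot
        (nhds (-(Real.sqrt (2 * Real.pi) / 2))) := by
      have := hint.neg
      rw [Iic_gauss] at this
      exact this.congr fun u => by rw [intervalIntegral.integral_symm, neg_neg]
    have hcomp : Tendsto (fun z : ℝ => ξ s * z) atBot atBot :=
      Tendsto.const_mul_atBot (hξpos s) tendsto_id
    have h2 := (hF.comp hcomp).const_mul (-Real.sqrt (2 / Real.pi))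
    have hval : -Real.sqrt (2 / Real.pi) * -(Real.sqrt (2 * Real.pi) / 2) = 1 := by
      rw [neg_mul_neg, show Real.sqrt (2 / Real.pi) * (Real.sqrt (2 * Real.pi) / 2)
        = Real.sqrt (2 / Real.pi) * Real.sqrt (2 * Real.pi) / 2 by ring,
        ← Real.sqrt_mul (by positivity)]
      rw [show 2 / Real.pi * (2 * Real.pi) = 4 by
        field_simp
        ring]
      rw [show (4:ℝ) = 2 ^ 2 by norm_num, Real.sqrt_sq (by norm_num)]
      norm_num
    rw [hval] at h2
    exact h2.congr (fun z => by simp only [Q0, Function.comp])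
end
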